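/- The function g₁(r) = r K(r)² / artanh(r) is strictly increasing on (0,1). -/

import Mathlib

open Real Set

/-- Complete elliptic integral of the first kind. -/
noncomputable def ellK (r : ℝ) : ℝ :=
  ∫ θ in (0:ℝ)..(π / 2), 1 / Real.sqrt (1 - r ^ 2 * Real.sin θ ^ 2)

/-- The inverse hyperbolic tangent. -/
noncomputable def artanh (r : ℝ) : ℝ := (1 / 2) * Real.log ((1 + r) / (1 - r))

open MeasureTheory intervalIntegral

namespace EllAux

noncomputable def ellE (r : ℝ) : ℝ :=
  ∫ θ in (0:ℝ)..(π / 2), Real.sqrt (1 - r ^ 2 * Real.sin θ ^ 2)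

lemma u_pos {r : ℝ} (hr : |r| < 1) (θ : ℝ) : 0 < 1 - r ^ 2 * Real.sin θ ^ 2 := by
  have h1 : r ^ 2 < 1 := by
    have := sq_abs r
    nlinarith [abs_nonneg r]
  nlinarith [Real.sin_sq_le_one θ, sq_nonneg (Real.sin θ), sq_nonneg r]

lemma sqrt_u_pos {r : ℝ} (hr : |r| < 1) (θ : ℝ) :
    0 < Real.sqrt (1 - r ^ 2 * Real.sin θ ^ 2) := Real.sqrt_pos.2 (u_pos hr θ)

lemma contK {r : ℝ} (hr : |r| < 1) :
    Continuous fun θ : ℝ => 1 / Real.sqrt (1 - r ^ 2 * Real.sin θ ^ 2) := by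
  apply Continuous.div continuous_const
  · exact (Real.continuous_sqrt.comp (by continuity))
  · exact fun θ => (sqrt_u_pos hr θ).ne'

lemma contE {r : ℝ} : Continuous fun θ : ℝ => Real.sqrt (1 - r ^ 2 * Real.sin θ ^ 2) :=
  Real.continuous_sqrt.comp (by continuity)

lemma contK' {r : ℝ} (hr : |r| < 1) :
    Continuous fun θ : ℝ =>
      r * Real.sin θ ^ 2 / Real.sqrt (1 - r ^ 2 * Real.sin θ ^ 2) ^ 3 := by
  apply Continuous.div (by continuity)
  · exact ((Real.continuous_sqrt.comp (by continuity)).pow 3)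
  · exact fun θ => pow_ne_zero 3 (sqrt_u_pos hr θ).ne'

end EllAux

namespace EllAux

lemma hasDerivAt_integrand_K (s : ℝ) {x : ℝ} (hx : |x| < 1) :
    HasDerivAt (fun y : ℝ => 1 / Real.sqrt (1 - y ^ 2 * Real.sin s ^ 2))
      (x * Real.sin s ^ 2 / Real.sqrt (1 - x ^ 2 * Real.sin s ^ 2) ^ 3) x := by
  have hu := u_pos hx s
  have hs := sqrt_u_pos hx s
  have hv : HasDerivAt (fun y : ℝ => 1 - y ^ 2 * Real.sin s ^ 2)
      (-(2 * x * Real.sin s ^ 2)) x := by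
    have := ((hasDerivAt_pow 2 x).mul_const (Real.sin s ^ 2)).const_sub 1
    simpa using this.congr_deriv (by ring)
  have hsq := hv.sqrt hu.ne'
  have hinv := hsq.inv hs.ne'
  have : HasDerivAt (fun y : ℝ => (Real.sqrt (1 - y ^ 2 * Real.sin s ^ 2))⁻¹)
      (x * Real.sin s ^ 2 / Real.sqrt (1 - x ^ 2 * Real.sin s ^ 2) ^ 3) x := by
    refine hinv.congr_deriv (Eq.symm ?_)
    have h2 : Real.sqrt (1 - x ^ 2 * Real.sin s ^ 2) ^ 2 = 1 - x ^ 2 * Real.sin s ^ 2 :=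
      Real.sq_sqrt hu.le
    have h3 : Real.sqrt (1 - x ^ 2 * Real.sin s ^ 2) ^ 3
        = (1 - x ^ 2 * Real.sin s ^ 2) * Real.sqrt (1 - x ^ 2 * Real.sin s ^ 2) := by
      calc Real.sqrt (1 - x ^ 2 * Real.sin s ^ 2) ^ 3
          = Real.sqrt (1 - x ^ 2 * Real.sin s ^ 2) ^ 2
            * Real.sqrt (1 - x ^ 2 * Real.sin s ^ 2) := by ring
        _ = _ := by rw [h2]
    rw [h3, h2]
    field_simp
  simpa only [one_div] using this

lemma hasDerivAt_integrand_E (s : ℝ) {x : ℝ} (hx : |x| < 1) :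
    HasDerivAt (fun y : ℝ => Real.sqrt (1 - y ^ 2 * Real.sin s ^ 2))
      (-(x * Real.sin s ^ 2) / Real.sqrt (1 - x ^ 2 * Real.sin s ^ 2)) x := by
  have hu := u_pos hx s
  have hv : HasDerivAt (fun y : ℝ => 1 - y ^ 2 * Real.sin s ^ 2)
      (-(2 * x * Real.sin s ^ 2)) x := by
    have := ((hasDerivAt_pow 2 x).mul_const (Real.sin s ^ 2)).const_sub 1
    simpa using this.congr_deriv (by ring)
  have := hv.sqrt hu.ne'
  convert this using 1
  ring

end EllAux

namespace EllAux

lemma abs_lt_of_ball {r x : ℝ} (hr : |r| < 1) (hx : x ∈ Metric.ball r ((1 - |r|) / 2)) :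
    |x| ≤ (1 + |r|) / 2 := by
  have := Metric.mem_ball.1 hx
  rw [Real.dist_eq] at this
  calc |x| = |x - r + r| := by ring_nf
    _ ≤ |x - r| + |r| := abs_add_le _ _
    _ ≤ (1 - |r|) / 2 + |r| := by linarith
    _ = (1 + |r|) / 2 := by ring

lemma hasDerivAt_ellK {r : ℝ} (hr : |r| < 1) :
    HasDerivAt ellK
      (∫ θ in (0:ℝ)..(π / 2),
        r * Real.sin θ ^ 2 / Real.sqrt (1 - r ^ 2 * Real.sin θ ^ 2) ^ 3) r := by
  set c : ℝ := (1 + |r|) / 2 with hc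
  have hc1 : c < 1 := by simp only [hc]; linarith
  have hc0 : 0 ≤ c := by simp only [hc]; positivity
  have hcc : |c| < 1 := by rwa [abs_of_nonneg hc0]
  have hεpos : (0:ℝ) < (1 - |r|) / 2 := by linarith [abs_nonneg r]
  have hball : ∀ x ∈ Metric.ball r ((1 - |r|) / 2), |x| < 1 := fun x hx =>
    lt_of_le_of_lt (abs_lt_of_ball hr hx) hc1
  have key := intervalIntegral.hasDerivAt_integral_of_dominated_loc_of_deriv_le
    (F := fun x θ => 1 / Real.sqrt (1 - x ^ 2 * Real.sin θ ^ 2))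
    (F' := fun x θ => x * Real.sin θ ^ 2 / Real.sqrt (1 - x ^ 2 * Real.sin θ ^ 2) ^ 3)
    (x₀ := r) (a := 0) (b := π / 2) (μ := volume)
    (bound := fun _ => c / Real.sqrt (1 - c ^ 2) ^ 3) (Metric.ball_mem_nhds r hεpos)
    ?_ ?_ ?_ ?_ ?_ ?_
  · exact key.2
  · filter_upwards [Metric.ball_mem_nhds r hεpos] with x hx
    exact (contK (hball x hx)).aestronglyMeasurable
  · exact (contK hr).intervalIntegrable _ _
  · exact (contK' hr).aestronglyMeasurable
  · refine Filter.Eventually.of_forall fun θ _ => fun x hx => ?_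
    have hx1 : |x| ≤ c := abs_lt_of_ball hr hx
    have hu := u_pos (lt_of_le_of_lt hx1 hc1) θ
    have huc : 1 - c ^ 2 ≤ 1 - x ^ 2 * Real.sin θ ^ 2 := by
      nlinarith [Real.sin_sq_le_one θ, sq_nonneg (Real.sin θ), sq_abs x, abs_nonneg x]
    have hsc : Real.sqrt (1 - c ^ 2) ≤ Real.sqrt (1 - x ^ 2 * Real.sin θ ^ 2) :=
      Real.sqrt_le_sqrt huc
    have hscpos : 0 < Real.sqrt (1 - c ^ 2) := Real.sqrt_pos.2 (by nlinarith)
    rw [Real.norm_eq_abs, abs_div]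
    rw [abs_of_nonneg (by positivity : (0:ℝ) ≤ Real.sqrt (1 - x ^ 2 * Real.sin θ ^ 2) ^ 3)]
    have hnum : |x * Real.sin θ ^ 2| ≤ c := by
      rw [abs_mul, abs_of_nonneg (sq_nonneg (Real.sin θ))]
      nlinarith [Real.sin_sq_le_one θ, sq_nonneg (Real.sin θ), abs_nonneg x]
    exact div_le_div₀ hc0 hnum (by positivity) (pow_le_pow_left₀ hscpos.le hsc 3)
  · exact intervalIntegrable_const
  · exact Filter.Eventually.of_forall fun θ _ => fun x hx =>
      hasDerivAt_integrand_K θ (hball x hx)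

end EllAux

namespace EllAux

lemma hasDerivAt_ellE {r : ℝ} (hr : |r| < 1) :
    HasDerivAt ellE
      (∫ θ in (0:ℝ)..(π / 2),
        -(r * Real.sin θ ^ 2) / Real.sqrt (1 - r ^ 2 * Real.sin θ ^ 2)) r := by
  set c : ℝ := (1 + |r|) / 2 with hc
  have hc1 : c < 1 := by simp only [hc]; linarith
  have hc0 : 0 ≤ c := by simp only [hc]; positivity
  have hεpos : (0:ℝ) < (1 - |r|) / 2 := by linarith [abs_nonneg r]
  have hball : ∀ x ∈ Metric.ball r ((1 - |r|) / 2), |x| < 1 := fun x hx =>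
    lt_of_le_of_lt (abs_lt_of_ball hr hx) hc1
  have key := intervalIntegral.hasDerivAt_integral_of_dominated_loc_of_deriv_le
    (F := fun x θ => Real.sqrt (1 - x ^ 2 * Real.sin θ ^ 2))
    (F' := fun x θ => -(x * Real.sin θ ^ 2) / Real.sqrt (1 - x ^ 2 * Real.sin θ ^ 2))
    (x₀ := r) (a := 0) (b := π / 2) (μ := volume)
    (bound := fun _ => c / Real.sqrt (1 - c ^ 2)) (Metric.ball_mem_nhds r hεpos)
    ?_ ?_ ?_ ?_ ?_ ?_
  · exact key.2
  · exact Filter.Eventually.of_forall fun x => contE.aestronglyMeasurable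
  · exact contE.intervalIntegrable _ _
  · refine Continuous.aestronglyMeasurable ?_
    apply Continuous.div (by continuity) (Real.continuous_sqrt.comp (by continuity))
    exact fun θ => (sqrt_u_pos hr θ).ne'
  · refine Filter.Eventually.of_forall fun θ _ => fun x hx => ?_
    have hx1 : |x| ≤ c := abs_lt_of_ball hr hx
    have huc : 1 - c ^ 2 ≤ 1 - x ^ 2 * Real.sin θ ^ 2 := by
      nlinarith [Real.sin_sq_le_one θ, sq_nonneg (Real.sin θ), sq_abs x, abs_nonneg x]
    have hsc : Real.sqrt (1 - c ^ 2) ≤ Real.sqrt (1 - x ^ 2 * Real.sin θ ^ 2) :=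
      Real.sqrt_le_sqrt huc
    have hscpos : 0 < Real.sqrt (1 - c ^ 2) := Real.sqrt_pos.2 (by nlinarith)
    rw [Real.norm_eq_abs, abs_div]
    rw [abs_of_nonneg (Real.sqrt_nonneg _)]
    have hnum : |-(x * Real.sin θ ^ 2)| ≤ c := by
      rw [abs_neg, abs_mul, abs_of_nonneg (sq_nonneg (Real.sin θ))]
      nlinarith [Real.sin_sq_le_one θ, sq_nonneg (Real.sin θ), abs_nonneg x]
    exact div_le_div₀ hc0 hnum hscpos hsc
  · exact intervalIntegrable_const
  · exact Filter.Eventually.of_forall fun θ _ => fun x hx =>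
      hasDerivAt_integrand_E θ (hball x hx)

end EllAux

namespace EllAux

lemma E_sub_K {r : ℝ} (hr : |r| < 1) :
    ellE r - (1 - r ^ 2) * ellK r
      = ∫ θ in (0:ℝ)..(π / 2),
          r ^ 2 * Real.cos θ ^ 2 / Real.sqrt (1 - r ^ 2 * Real.sin θ ^ 2) := by
  rw [ellE, ellK, ← intervalIntegral.integral_const_mul, ← intervalIntegral.integral_sub
    (contE.intervalIntegrable _ _) (((contK hr).intervalIntegrable _ _).const_mul (1 - r ^ 2))]
  apply intervalIntegral.integral_congr
  intro θ _
  have hu := u_pos hr θ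
  have hs := sqrt_u_pos hr θ
  have h2 : Real.sqrt (1 - r ^ 2 * Real.sin θ ^ 2) * Real.sqrt (1 - r ^ 2 * Real.sin θ ^ 2)
      = 1 - r ^ 2 * Real.sin θ ^ 2 := Real.mul_self_sqrt hu.le
  field_simp
  nlinarith [Real.sin_sq_add_cos_sq θ, h2, hs]

lemma inner_hasDerivAt {r : ℝ} (hr : |r| < 1) (θ : ℝ) :
    HasDerivAt (fun t => Real.sin t * Real.cos t / Real.sqrt (1 - r ^ 2 * Real.sin t ^ 2))
      (Real.cos θ ^ 2 / Real.sqrt (1 - r ^ 2 * Real.sin θ ^ 2)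
        - (1 - r ^ 2) * Real.sin θ ^ 2 / Real.sqrt (1 - r ^ 2 * Real.sin θ ^ 2) ^ 3) θ := by
  have hu := u_pos hr θ
  have hs := sqrt_u_pos hr θ
  have hN : HasDerivAt (fun t => Real.sin t * Real.cos t)
      (Real.cos θ * Real.cos θ + Real.sin θ * -Real.sin θ) θ :=
    (Real.hasDerivAt_sin θ).mul (Real.hasDerivAt_cos θ)
  have hv : HasDerivAt (fun t => 1 - r ^ 2 * Real.sin t ^ 2)
      (-(r ^ 2 * (2 * Real.sin θ * Real.cos θ))) θ := by
    have := ((((Real.hasDerivAt_sin θ).pow 2)).const_mul (r ^ 2)).const_sub 1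
    simpa using this.congr_deriv (by ring)
  have hD : HasDerivAt (fun t => Real.sqrt (1 - r ^ 2 * Real.sin t ^ 2))
      (-(r ^ 2 * (2 * Real.sin θ * Real.cos θ)) / (2 * Real.sqrt (1 - r ^ 2 * Real.sin θ ^ 2))) θ :=
    hv.sqrt hu.ne'
  have := hN.div hD hs.ne'
  refine this.congr_deriv (Eq.symm ?_)
  have h2 : Real.sqrt (1 - r ^ 2 * Real.sin θ ^ 2) * Real.sqrt (1 - r ^ 2 * Real.sin θ ^ 2)
      = 1 - r ^ 2 * Real.sin θ ^ 2 := Real.mul_self_sqrt hu.le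
  have h3 : Real.sqrt (1 - r ^ 2 * Real.sin θ ^ 2) ^ 3
      = (1 - r ^ 2 * Real.sin θ ^ 2) * Real.sqrt (1 - r ^ 2 * Real.sin θ ^ 2) := by
    calc Real.sqrt (1 - r ^ 2 * Real.sin θ ^ 2) ^ 3
        = Real.sqrt (1 - r ^ 2 * Real.sin θ ^ 2) * Real.sqrt (1 - r ^ 2 * Real.sin θ ^ 2)
          * Real.sqrt (1 - r ^ 2 * Real.sin θ ^ 2) := by ring
      _ = _ := by rw [h2]
  set S := Real.sqrt (1 - r ^ 2 * Real.sin θ ^ 2) with hS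
  field_simp
  ring_nf
  linear_combination (Real.sin θ ^ 2) * h2
    - (r ^ 2 * Real.sin θ ^ 2) * Real.sin_sq_add_cos_sq θ

end EllAux

namespace EllAux

lemma cont_div_sqrt {r : ℝ} (hr : |r| < 1) {f : ℝ → ℝ} (hf : Continuous f) (n : ℕ) :
    Continuous fun θ : ℝ => f θ / Real.sqrt (1 - r ^ 2 * Real.sin θ ^ 2) ^ n := by
  apply hf.div ((Real.continuous_sqrt.comp (by continuity)).pow n)
  exact fun θ => pow_ne_zero n (sqrt_u_pos hr θ).ne'

lemma integral_inner_zero {r : ℝ} (hr : |r| < 1) :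
    (∫ θ in (0:ℝ)..(π / 2),
      (Real.cos θ ^ 2 / Real.sqrt (1 - r ^ 2 * Real.sin θ ^ 2)
        - (1 - r ^ 2) * Real.sin θ ^ 2 / Real.sqrt (1 - r ^ 2 * Real.sin θ ^ 2) ^ 3)) = 0 := by
  have hint : IntervalIntegrable
      (fun θ => Real.cos θ ^ 2 / Real.sqrt (1 - r ^ 2 * Real.sin θ ^ 2)
        - (1 - r ^ 2) * Real.sin θ ^ 2 / Real.sqrt (1 - r ^ 2 * Real.sin θ ^ 2) ^ 3)
      volume 0 (π / 2) := by
    refine Continuous.intervalIntegrable ?_ _ _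
    have h1 := cont_div_sqrt hr (f := fun θ => Real.cos θ ^ 2) (by continuity) 1
    have h2 := cont_div_sqrt hr (f := fun θ => (1 - r ^ 2) * Real.sin θ ^ 2) (by continuity) 3
    simpa [Pi.sub_def] using h1.sub h2
  have := intervalIntegral.integral_eq_sub_of_hasDerivAt
    (f := fun t => Real.sin t * Real.cos t / Real.sqrt (1 - r ^ 2 * Real.sin t ^ 2))
    (fun θ _ => inner_hasDerivAt hr θ) hint
  rw [this]
  simp [Real.cos_pi_div_two, Real.sin_pi_div_two]

lemma cont_div_sqrt1 {r : ℝ} (hr : |r| < 1) {f : ℝ → ℝ} (hf : Continuous f) :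
    Continuous fun θ : ℝ => f θ / Real.sqrt (1 - r ^ 2 * Real.sin θ ^ 2) := by
  simpa using cont_div_sqrt hr hf 1

lemma hasDerivAt_ellK' {r : ℝ} (h0 : 0 < r) (h1 : r < 1) :
    HasDerivAt ellK ((ellE r - (1 - r ^ 2) * ellK r) / (r * (1 - r ^ 2))) r := by
  have habs : |r| < 1 := abs_lt.2 ⟨by linarith, h1⟩
  have h := hasDerivAt_ellK habs
  have hic : IntervalIntegrable
      (fun θ => Real.cos θ ^ 2 / Real.sqrt (1 - r ^ 2 * Real.sin θ ^ 2)) volume 0 (π / 2) :=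
    (cont_div_sqrt1 habs (by continuity)).intervalIntegrable _ _
  have his : IntervalIntegrable
      (fun θ => Real.sin θ ^ 2 / Real.sqrt (1 - r ^ 2 * Real.sin θ ^ 2) ^ 3) volume 0 (π / 2) :=
    (cont_div_sqrt habs (by continuity) 3).intervalIntegrable _ _
  -- ∫ cos²/√u = (1-r²) ∫ sin²/√u³
  have hzero := integral_inner_zero habs
  rw [intervalIntegral.integral_sub hic (by
      simpa [mul_div_assoc] using his.const_mul (1 - r ^ 2)), sub_eq_zero] at hzero
  have hcs : (∫ θ in (0:ℝ)..(π / 2),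
        Real.cos θ ^ 2 / Real.sqrt (1 - r ^ 2 * Real.sin θ ^ 2))
      = (1 - r ^ 2) * ∫ θ in (0:ℝ)..(π / 2),
        Real.sin θ ^ 2 / Real.sqrt (1 - r ^ 2 * Real.sin θ ^ 2) ^ 3 := by
    rw [hzero, ← intervalIntegral.integral_const_mul]
    simp [mul_div_assoc]
  have hEK : ellE r - (1 - r ^ 2) * ellK r
      = r ^ 2 * (1 - r ^ 2) * ∫ θ in (0:ℝ)..(π / 2),
          Real.sin θ ^ 2 / Real.sqrt (1 - r ^ 2 * Real.sin θ ^ 2) ^ 3 := by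
    rw [E_sub_K habs]
    rw [show (fun θ => r ^ 2 * Real.cos θ ^ 2 / Real.sqrt (1 - r ^ 2 * Real.sin θ ^ 2))
        = (fun θ => r ^ 2 * (Real.cos θ ^ 2 / Real.sqrt (1 - r ^ 2 * Real.sin θ ^ 2))) from
      funext fun θ => by ring]
    rw [intervalIntegral.integral_const_mul, hcs]
    ring
  have hval : (∫ θ in (0:ℝ)..(π / 2),
        r * Real.sin θ ^ 2 / Real.sqrt (1 - r ^ 2 * Real.sin θ ^ 2) ^ 3)
      = (ellE r - (1 - r ^ 2) * ellK r) / (r * (1 - r ^ 2)) := by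
    rw [hEK]
    rw [show (fun θ => r * Real.sin θ ^ 2 / Real.sqrt (1 - r ^ 2 * Real.sin θ ^ 2) ^ 3)
        = (fun θ => r * (Real.sin θ ^ 2 / Real.sqrt (1 - r ^ 2 * Real.sin θ ^ 2) ^ 3)) from
      funext fun θ => by ring]
    rw [intervalIntegral.integral_const_mul]
    have hne : r * (1 - r ^ 2) ≠ 0 := by nlinarith
    rw [eq_div_iff hne]
    ring
  rwa [hval] at h

lemma hasDerivAt_ellE' {r : ℝ} (h0 : 0 < r) (h1 : r < 1) :
    HasDerivAt ellE ((ellE r - ellK r) / r) r := by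
  have habs : |r| < 1 := abs_lt.2 ⟨by linarith, h1⟩
  have h := hasDerivAt_ellE habs
  have hval : (∫ θ in (0:ℝ)..(π / 2),
        -(r * Real.sin θ ^ 2) / Real.sqrt (1 - r ^ 2 * Real.sin θ ^ 2))
      = (ellE r - ellK r) / r := by
    have hEK : ellE r - ellK r = ∫ θ in (0:ℝ)..(π / 2),
        -(r ^ 2 * Real.sin θ ^ 2) / Real.sqrt (1 - r ^ 2 * Real.sin θ ^ 2) := by
      rw [ellE, ellK, ← intervalIntegral.integral_sub (contE.intervalIntegrable _ _)
        ((contK habs).intervalIntegrable _ _)]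
      apply intervalIntegral.integral_congr
      intro θ _
      have hu := u_pos habs θ
      have hs := sqrt_u_pos habs θ
      have h2 : Real.sqrt (1 - r ^ 2 * Real.sin θ ^ 2) * Real.sqrt (1 - r ^ 2 * Real.sin θ ^ 2)
          = 1 - r ^ 2 * Real.sin θ ^ 2 := Real.mul_self_sqrt hu.le
      field_simp
      rw [Real.sq_sqrt hu.le]; ring
    rw [eq_div_iff h0.ne', hEK, mul_comm, ← intervalIntegral.integral_const_mul]
    apply intervalIntegral.integral_congr
    intro θ _
    have hrr : r * r⁻¹ = 1 := mul_inv_cancel₀ h0.ne'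
    simp only [neg_div, mul_div_assoc, div_eq_mul_inv]
    ring
  rwa [hval] at h


lemma ellK_pos {r : ℝ} (hr : |r| < 1) : 0 < ellK r := by
  apply intervalIntegral.intervalIntegral_pos_of_pos ((contK hr).intervalIntegrable _ _)
  · intro x
    have := sqrt_u_pos hr x
    positivity
  · positivity

lemma ellE_pos {r : ℝ} (hr : |r| < 1) : 0 < ellE r := by
  apply intervalIntegral.intervalIntegral_pos_of_pos (contE.intervalIntegrable _ _)
  · intro x
    exact sqrt_u_pos hr x
  · positivity

lemma D_pos {r : ℝ} (h0 : 0 < r) (h1 : r < 1) : 0 < ellE r - (1 - r ^ 2) * ellK r := by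
  have habs : |r| < 1 := abs_lt.2 ⟨by linarith, h1⟩
  rw [E_sub_K habs]
  apply intervalIntegral.intervalIntegral_pos_of_pos_on
    ((cont_div_sqrt1 habs (by continuity)).intervalIntegrable _ _)
  · intro x hx
    have hc : 0 < Real.cos x := Real.cos_pos_of_mem_Ioo
      ⟨by linarith [hx.1, Real.pi_pos], hx.2⟩
    have := sqrt_u_pos habs x
    positivity
  · positivity

lemma ellK_le_four {r : ℝ} (h0 : 0 ≤ r) (h2 : r ≤ 1 / 2) : ellK r ≤ 4 := by
  have habs : |r| < 1 := by rw [abs_of_nonneg h0]; linarith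
  have hb : ∀ θ : ℝ, 1 / Real.sqrt (1 - r ^ 2 * Real.sin θ ^ 2) ≤ 2 := by
    intro θ
    have hu : (1:ℝ) / 4 ≤ 1 - r ^ 2 * Real.sin θ ^ 2 := by
      nlinarith [Real.sin_sq_le_one θ, sq_nonneg (Real.sin θ)]
    have hs : (1:ℝ) / 2 ≤ Real.sqrt (1 - r ^ 2 * Real.sin θ ^ 2) := by
      rw [show (1:ℝ)/2 = Real.sqrt (1/4) by
        rw [show (1:ℝ)/4 = (1/2)^2 by norm_num, Real.sqrt_sq (by norm_num)]]
      exact Real.sqrt_le_sqrt hu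
    rw [div_le_iff₀ (by linarith)]
    linarith
  calc ellK r ≤ ∫ _ in (0:ℝ)..(π / 2), (2:ℝ) := by
        apply intervalIntegral.integral_mono_on (by positivity)
          ((contK habs).intervalIntegrable _ _) intervalIntegrable_const
        intro x _
        exact hb x
    _ = π := by simp
    _ ≤ 4 := by linarith [Real.pi_le_four]

lemma hasDerivAt_artanh {r : ℝ} (hr : |r| < 1) :
    HasDerivAt _root_.artanh (1 / (1 - r ^ 2)) r := by
  have h1 : -1 < r := (abs_lt.1 hr).1
  have h2 : r < 1 := (abs_lt.1 hr).2
  have hg : HasDerivAt (fun x : ℝ => (1 + x) / (1 - x))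
      ((1 * (1 - r) - (1 + r) * (-1)) / (1 - r) ^ 2) r :=
    ((hasDerivAt_id r).const_add 1).div ((hasDerivAt_id r).const_sub 1)
      (by intro h; linarith)
  have hpos : 0 < (1 + r) / (1 - r) := by
    apply div_pos <;> linarith
  have hlog := (hg.log hpos.ne').const_mul (1 / 2 : ℝ)
  have : HasDerivAt _root_.artanh
      (1 / 2 * (((1 * (1 - r) - (1 + r) * -1) / (1 - r) ^ 2) / ((1 + r) / (1 - r)))) r := hlog
  convert this using 1
  have hne1 : (1 - r) ≠ 0 := by intro h; linarith
  have hne2 : (1 + r) ≠ 0 := by intro h; linarith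
  have hne3 : (1 - r ^ 2) ≠ 0 := by intro h; nlinarith
  field_simp
  ring



lemma artanh_pos {r : ℝ} (h0 : 0 < r) (h1 : r < 1) : 0 < _root_.artanh r := by
  have : (1:ℝ) < (1 + r) / (1 - r) := by
    rw [lt_div_iff₀ (by linarith)]
    linarith
  have := Real.log_pos this
  rw [_root_.artanh]
  linarith

/-- The quotient `ρ r = K(r) * (2E(r) - (1-r²)K(r))`. -/
noncomputable def rho (r : ℝ) : ℝ := ellK r * (2 * ellE r - (1 - r ^ 2) * ellK r)

lemma rho_pos {r : ℝ} (h0 : 0 < r) (h1 : r < 1) : 0 < rho r := by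
  have habs : |r| < 1 := abs_lt.2 ⟨by linarith, h1⟩
  have hK := ellK_pos habs
  have hE := ellE_pos habs
  have hD := D_pos h0 h1
  have : 0 < 2 * ellE r - (1 - r ^ 2) * ellK r := by linarith
  exact mul_pos hK this

lemma hasDerivAt_h {r : ℝ} (h0 : 0 < r) (h1 : r < 1) :
    HasDerivAt (fun r => 2 * ellE r - (1 - r ^ 2) * ellK r)
      ((ellE r - (1 - r ^ 2) * ellK r) / r) r := by
  have habs : |r| < 1 := abs_lt.2 ⟨by linarith, h1⟩
  have hK := hasDerivAt_ellK' h0 h1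
  have hE := hasDerivAt_ellE' h0 h1
  have hq : HasDerivAt (fun x : ℝ => 1 - x ^ 2) (-(2 * r)) r := by
    simpa using ((hasDerivAt_pow 2 r).const_sub 1).congr_deriv (by ring)
  have := (hE.const_mul 2).sub (hq.mul hK)
  refine this.congr_deriv (Eq.symm ?_)
  have hne : r ≠ 0 := h0.ne'
  have hne2 : (1 - r ^ 2) ≠ 0 := by nlinarith
  field_simp
  ring

lemma strictMonoOn_ellK : StrictMonoOn ellK (Ioo 0 1) := by
  apply strictMonoOn_of_deriv_pos (convex_Ioo 0 1)
  · intro x hx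
    exact ((hasDerivAt_ellK' hx.1 hx.2).continuousAt).continuousWithinAt
  · rw [interior_Ioo]
    intro x hx
    rw [(hasDerivAt_ellK' hx.1 hx.2).deriv]
    have hD := D_pos hx.1 hx.2
    have hden : 0 < x * (1 - x ^ 2) := by nlinarith [hx.1, hx.2]
    exact div_pos hD hden

lemma strictMonoOn_h : StrictMonoOn (fun r => 2 * ellE r - (1 - r ^ 2) * ellK r) (Ioo 0 1) := by
  apply strictMonoOn_of_deriv_pos (convex_Ioo 0 1)
  · intro x hx
    exact ((hasDerivAt_h hx.1 hx.2).continuousAt).continuousWithinAt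
  · rw [interior_Ioo]
    intro x hx
    rw [(hasDerivAt_h hx.1 hx.2).deriv]
    exact div_pos (D_pos hx.1 hx.2) hx.1

lemma strictMonoOn_rho : StrictMonoOn rho (Ioo 0 1) := by
  intro x hx y hy hxy
  have habsx : |x| < 1 := abs_lt.2 ⟨by linarith [hx.1], hx.2⟩
  have hKx := ellK_pos habsx
  have hEx := ellE_pos habsx
  have hDx := D_pos hx.1 hx.2
  have hK := strictMonoOn_ellK hx hy hxy
  have hh := strictMonoOn_h hx hy hxy
  simp only at hh
  rw [rho, rho]
  nlinarith

lemma rho_continuousOn : ContinuousOn rho (Ioo 0 1) := by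
  intro x hx
  have hKc : ContinuousAt ellK x := (hasDerivAt_ellK' hx.1 hx.2).continuousAt
  have hEc : ContinuousAt ellE x := (hasDerivAt_ellE' hx.1 hx.2).continuousAt
  have : ContinuousAt (fun y => ellK y * (2 * ellE y - (1 - y ^ 2) * ellK y)) x :=
    hKc.mul ((hEc.const_mul 2).sub
      ((continuousAt_const.sub ((continuous_pow 2).continuousAt)).mul hKc))
  exact this.continuousWithinAt

lemma hasDerivAt_F {r : ℝ} (h0 : 0 < r) (h1 : r < 1) :
    HasDerivAt (fun r => r * ellK r ^ 2) (rho r / (1 - r ^ 2)) r := by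
  have hK := hasDerivAt_ellK' h0 h1
  have := (hasDerivAt_id r).mul (hK.pow 2)
  refine this.congr_deriv (Eq.symm ?_)
  have hne : r ≠ 0 := h0.ne'
  have hne2 : (1 - r ^ 2) ≠ 0 := by nlinarith
  simp only [id, Pi.pow_apply]
  rw [rho]
  field_simp
  ring

end EllAux

namespace EllAux

lemma Icc_subset_Ioo01 {a b : ℝ} (ha : a ∈ Ioo (0:ℝ) 1) (hb : b ∈ Ioo (0:ℝ) 1) :
    Icc a b ⊆ Ioo (0:ℝ) 1 := fun t ht => ⟨lt_of_lt_of_le ha.1 ht.1, lt_of_le_of_lt ht.2 hb.2⟩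

lemma contOn_Fderiv {a b : ℝ} (ha : a ∈ Ioo (0:ℝ) 1) (hb : b ∈ Ioo (0:ℝ) 1) (hab : a ≤ b) :
    ContinuousOn (fun t => rho t / (1 - t ^ 2)) (uIcc a b) := by
  rw [uIcc_of_le hab]
  have hsub := Icc_subset_Ioo01 ha hb
  apply (rho_continuousOn.mono hsub).div (by fun_prop)
  intro t ht
  have := hsub ht
  nlinarith [this.1, this.2]

lemma contOn_Gderiv {a b : ℝ} (ha : a ∈ Ioo (0:ℝ) 1) (hb : b ∈ Ioo (0:ℝ) 1) (hab : a ≤ b) :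
    ContinuousOn (fun t : ℝ => 1 / (1 - t ^ 2)) (uIcc a b) := by
  rw [uIcc_of_le hab]
  have hsub := Icc_subset_Ioo01 ha hb
  apply continuousOn_const.div (by fun_prop)
  intro t ht
  have := hsub ht
  nlinarith [this.1, this.2]

lemma F_ftc {a b : ℝ} (ha : a ∈ Ioo (0:ℝ) 1) (hb : b ∈ Ioo (0:ℝ) 1) (hab : a ≤ b) :
    b * ellK b ^ 2 - a * ellK a ^ 2 = ∫ t in a..b, rho t / (1 - t ^ 2) := by
  rw [← intervalIntegral.integral_eq_sub_of_hasDerivAt (f := fun r => r * ellK r ^ 2)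
    (f' := fun t => rho t / (1 - t ^ 2)) ?_ ((contOn_Fderiv ha hb hab).intervalIntegrable)]
  intro t ht
  rw [uIcc_of_le hab] at ht
  have h := Icc_subset_Ioo01 ha hb ht
  exact hasDerivAt_F h.1 h.2

lemma G_ftc {a b : ℝ} (ha : a ∈ Ioo (0:ℝ) 1) (hb : b ∈ Ioo (0:ℝ) 1) (hab : a ≤ b) :
    _root_.artanh b - _root_.artanh a = ∫ t in a..b, 1 / (1 - t ^ 2) := by
  rw [← intervalIntegral.integral_eq_sub_of_hasDerivAt (f := _root_.artanh)
    (f' := fun t : ℝ => 1 / (1 - t ^ 2)) ?_ ((contOn_Gderiv ha hb hab).intervalIntegrable)]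
  intro t ht
  rw [uIcc_of_le hab] at ht
  have h := Icc_subset_Ioo01 ha hb ht
  exact hasDerivAt_artanh (abs_lt.2 ⟨by linarith [h.1], h.2⟩)

lemma artanh_lt {a b : ℝ} (ha : a ∈ Ioo (0:ℝ) 1) (hb : b ∈ Ioo (0:ℝ) 1) (hab : a < b) :
    _root_.artanh a < _root_.artanh b := by
  have h := G_ftc ha hb hab.le
  have hpos : 0 < ∫ t in a..b, 1 / (1 - t ^ 2) := by
    apply intervalIntegral.intervalIntegral_pos_of_pos_on
      ((contOn_Gderiv ha hb hab.le).intervalIntegrable) _ hab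
    intro t ht
    have h1 : 0 < t := lt_trans ha.1 ht.1
    have h2 : t < 1 := lt_trans ht.2 hb.2
    have : 0 < 1 - t ^ 2 := by nlinarith
    positivity
  linarith

lemma key_lt {a b : ℝ} (ha : a ∈ Ioo (0:ℝ) 1) (hb : b ∈ Ioo (0:ℝ) 1) (hab : a < b) :
    rho a * (_root_.artanh b - _root_.artanh a) < b * ellK b ^ 2 - a * ellK a ^ 2 := by
  rw [F_ftc ha hb hab.le, G_ftc ha hb hab.le, ← intervalIntegral.integral_const_mul]
  rw [← sub_pos, ← intervalIntegral.integral_sub ((contOn_Fderiv ha hb hab.le).intervalIntegrable)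
    (((contOn_Gderiv ha hb hab.le).intervalIntegrable).const_mul (rho a))]
  apply intervalIntegral.intervalIntegral_pos_of_pos_on _ _ hab
  · apply ContinuousOn.intervalIntegrable
    exact (contOn_Fderiv ha hb hab.le).sub ((contOn_Gderiv ha hb hab.le).const_smul (rho a))
  · intro t ht
    have h1 : 0 < t := lt_trans ha.1 ht.1
    have h2 : t < 1 := lt_trans ht.2 hb.2
    have hden : 0 < 1 - t ^ 2 := by nlinarith
    have hrho : rho a < rho t := strictMonoOn_rho ha ⟨h1, h2⟩ ht.1
    have : rho t / (1 - t ^ 2) - rho a * (1 / (1 - t ^ 2))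
        = (rho t - rho a) / (1 - t ^ 2) := by field_simp
    rw [this]
    exact div_pos (by linarith) hden

lemma F_le {a : ℝ} (ha : a ∈ Ioo (0:ℝ) 1) : a * ellK a ^ 2 ≤ rho a * _root_.artanh a := by
  apply le_of_forall_pos_le_add
  intro δ hδ
  set ε : ℝ := min (a / 2) (min (1 / 2) (δ / 16)) with hε
  have hε0 : 0 < ε := by
    apply lt_min (by linarith [ha.1])
    exact lt_min (by norm_num) (by linarith)
  have hεa : ε ≤ a / 2 := min_le_left _ _
  have hεhalf : ε ≤ 1 / 2 := le_trans (min_le_right _ _) (min_le_left _ _)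
  have hεδ : ε ≤ δ / 16 := le_trans (min_le_right _ _) (min_le_right _ _)
  have hεI : ε ∈ Ioo (0:ℝ) 1 := ⟨hε0, by linarith⟩
  have hεa' : ε ≤ a := by linarith [ha.1]
  have hftc := F_ftc hεI ha hεa'
  have hgtc := G_ftc hεI ha hεa'
  have hmono : (∫ t in ε..a, rho t / (1 - t ^ 2))
      ≤ ∫ t in ε..a, rho a * (1 / (1 - t ^ 2)) := by
    apply intervalIntegral.integral_mono_on hεa'
      ((contOn_Fderiv hεI ha hεa').intervalIntegrable |>.mono_set (by rw [uIcc_of_le hεa']))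
      ((((contOn_Gderiv hεI ha hεa').intervalIntegrable).const_mul _).mono_set
        (by rw [uIcc_of_le hεa']))
    intro t ht
    have htI : t ∈ Ioo (0:ℝ) 1 := Icc_subset_Ioo01 hεI ha ht
    have hden : 0 < 1 - t ^ 2 := by nlinarith [htI.1, htI.2]
    have hrho : rho t ≤ rho a := strictMonoOn_rho.monotoneOn htI ha ht.2
    rw [mul_one_div, div_le_div_iff₀ hden hden]
    nlinarith
  rw [intervalIntegral.integral_const_mul, ← hgtc] at hmono
  have hKε : ellK ε ≤ 4 := ellK_le_four hε0.le hεhalf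
  have hKε0 : 0 < ellK ε := ellK_pos (abs_lt.2 ⟨by linarith, hεI.2⟩)
  have hKsq : ellK ε ^ 2 ≤ 16 := by nlinarith
  have hFε : ε * ellK ε ^ 2 ≤ 16 * ε := by nlinarith
  have hartε : 0 < _root_.artanh ε := artanh_pos hε0 hεI.2
  have hrhoa : 0 < rho a := rho_pos ha.1 ha.2
  nlinarith [mul_pos hrhoa hartε]

end EllAux

open EllAux in
/-- `r ↦ r K(r)² / artanh r` is strictly increasing on `(0,1)`. -/
theorem strictMonoOn_mul_ellK_sq_div_artanh :
    StrictMonoOn (fun r : ℝ => r * ellK r ^ 2 / _root_.artanh r) (Ioo 0 1) := by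
  intro a ha b hb hab
  simp only
  have hGa : 0 < _root_.artanh a := EllAux.artanh_pos ha.1 ha.2
  have hGb : 0 < _root_.artanh b := EllAux.artanh_pos hb.1 hb.2
  rw [div_lt_div_iff₀ hGa hGb]
  have hkey := EllAux.key_lt ha hb hab
  have hFa := EllAux.F_le ha
  have hG := EllAux.artanh_lt ha hb hab
  have h1 : rho a * (_root_.artanh b - _root_.artanh a) * _root_.artanh a
      < (b * ellK b ^ 2 - a * ellK a ^ 2) * _root_.artanh a :=
    mul_lt_mul_of_pos_right hkey hGa
  have h2 : a * ellK a ^ 2 * (_root_.artanh b - _root_.artanh a)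
      ≤ rho a * _root_.artanh a * (_root_.artanh b - _root_.artanh a) :=
    mul_le_mul_of_nonneg_right hFa (by linarith)
  nlinarith [h1, h2]
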